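/- For any odd positive integer k, the following q-series identity holds for |q| < 1: 2 ∑_{n odd, n≥1} λ_k(n) q^n = ∑_{ℓ=0}^∞ (2ℓ+1)^k (q^{(2ℓ+1)²} + q^{(2ℓ+1)² + 2(2ℓ+1)}) / (1 − q^{2(2ℓ+1)}). -/

import Mathlib

set_option maxHeartbeats 1000000

open scoped BigOperators

/-- `λ_k(n) = (1/2) ∑_{d ∣ n} min(d, n/d)^k`. -/
def lambdaFn (k n : ℕ) : ℚ := (1/2) * ∑ d ∈ n.divisors, (min d (n / d) : ℚ) ^ k

noncomputable section LambdaAux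

/-- The summand attached to an ordered pair of divisors. -/
def Gfun (k : ℕ) (q : ℂ) : ℕ × ℕ → ℂ :=
  fun p => ((min p.1 p.2 : ℕ) : ℂ) ^ k * q ^ (p.1 * p.2)

/-- The summand over ordered pairs of odd numbers, reindexed by `a ↦ 2a+1`. -/
def Ffun (k : ℕ) (q : ℂ) : ℕ × ℕ → ℂ :=
  fun p => Gfun k q (2 * p.1 + 1, 2 * p.2 + 1)

def lamToS : ℕ × ℕ → Σ m : ℕ, {x // x ∈ (2 * m + 1).divisorsAntidiagonal} :=
  fun p => ⟨2 * p.1 * p.2 + p.1 + p.2, ⟨(2 * p.1 + 1, 2 * p.2 + 1), by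
    rw [Nat.mem_divisorsAntidiagonal]
    constructor
    · ring
    · omega⟩⟩

def lamFromS : (Σ m : ℕ, {x // x ∈ (2 * m + 1).divisorsAntidiagonal}) → ℕ × ℕ :=
  fun t => (t.2.1.1 / 2, t.2.1.2 / 2)

lemma lam_left_inv : Function.LeftInverse lamFromS lamToS := by
  rintro ⟨a, b⟩
  show ((2 * a + 1) / 2, (2 * b + 1) / 2) = (a, b)
  congr 1 <;> omega

lemma lam_right_inv : Function.RightInverse lamFromS lamToS := by
  rintro ⟨m, ⟨⟨d, e⟩, h⟩⟩
  rw [Nat.mem_divisorsAntidiagonal] at h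
  obtain ⟨hde, -⟩ := h
  have hodd : Odd (d * e) := by rw [hde]; exact ⟨m, by ring⟩
  rw [Nat.odd_mul] at hodd
  obtain ⟨a, ha⟩ : ∃ a, d = 2 * a + 1 := by
    have := hodd.1; rw [Nat.odd_iff] at this; exact ⟨d / 2, by omega⟩
  obtain ⟨b, hb⟩ : ∃ b, e = 2 * b + 1 := by
    have := hodd.2; rw [Nat.odd_iff] at this; exact ⟨e / 2, by omega⟩
  subst ha; subst hb
  have hm : 2 * a * b + a + b = m := by
    have h1 : 2 * (2 * a * b + a + b) + 1 = 2 * m + 1 := by rw [← hde]; ring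
    linarith
  subst hm
  show lamToS ((2 * a + 1) / 2, (2 * b + 1) / 2) = _
  have h2 : (2 * a + 1) / 2 = a := by omega
  have h3 : (2 * b + 1) / 2 = b := by omega
  rw [h2, h3]
  rfl

def lamEquiv : (ℕ × ℕ) ≃ Σ m : ℕ, {x // x ∈ (2 * m + 1).divisorsAntidiagonal} :=
  ⟨lamToS, lamFromS, lam_left_inv, lam_right_inv⟩

lemma lamEquiv_apply (p : ℕ × ℕ) : lamEquiv p = lamToS p := rfl

def interTo : ℕ × ℕ → ℕ × ℕ :=
  fun p => if p.2 % 2 = 0 then (p.1, p.1 + p.2 / 2) else (p.1 + p.2 / 2 + 1, p.1)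

def interFrom : ℕ × ℕ → ℕ × ℕ :=
  fun p => if p.1 ≤ p.2 then (p.1, 2 * (p.2 - p.1)) else (p.2, 2 * (p.1 - p.2) - 1)

def interEquiv : (ℕ × ℕ) ≃ ℕ × ℕ := by
  refine ⟨interTo, interFrom, ?_, ?_⟩
  · rintro ⟨l, j⟩
    simp only [interTo, interFrom]
    split_ifs <;> simp_all <;> first
      | (exfalso; omega)
      | (congr 1 <;> omega)
  · rintro ⟨a, b⟩
    simp only [interTo, interFrom]
    split_ifs <;> (try (exfalso; omega)) <;> (congr 1 <;> omega)

lemma summable_aux (k : ℕ) {x : ℝ} (hx0 : 0 ≤ x) (hx : x < 1) :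
    Summable (fun a : ℕ => ((2 * a + 1 : ℕ) : ℝ) ^ k * x ^ a) := by
  have h1 : Summable (fun a : ℕ => (4 : ℝ) ^ k * ((a : ℝ) ^ k * x ^ a)) :=
    (summable_pow_mul_geometric_of_norm_lt_one (R := ℝ) k
      (by rwa [Real.norm_eq_abs, abs_of_nonneg hx0])).mul_left _
  refine h1.of_norm_bounded_eventually ?_
  rw [Nat.cofinite_eq_atTop]
  filter_upwards [Filter.eventually_ge_atTop 1] with a ha
  have hxa : (0:ℝ) ≤ x ^ a := pow_nonneg hx0 a
  have hb : ((2 * a + 1 : ℕ) : ℝ) ^ k ≤ (4:ℝ) ^ k * (a : ℝ) ^ k := by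
    rw [← mul_pow]
    refine pow_le_pow_left₀ (by positivity) ?_ k
    push_cast
    have : (1:ℝ) ≤ (a:ℝ) := by exact_mod_cast ha
    nlinarith
  rw [Real.norm_eq_abs, abs_of_nonneg (by positivity)]
  calc ((2 * a + 1 : ℕ) : ℝ) ^ k * x ^ a ≤ (4:ℝ) ^ k * (a : ℝ) ^ k * x ^ a :=
        mul_le_mul_of_nonneg_right hb hxa
    _ = (4 : ℝ) ^ k * ((a : ℝ) ^ k * x ^ a) := by ring

lemma summable_F (k : ℕ) {q : ℂ} (hq : ‖q‖ < 1) : Summable (Ffun k q) := by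
  have hr0 : 0 ≤ ‖q‖ := norm_nonneg q
  have hx0 : (0:ℝ) ≤ ‖q‖ ^ 2 := by positivity
  have hx : ‖q‖ ^ 2 < 1 := by nlinarith
  have hg := summable_aux k hx0 hx
  have hprod : Summable (fun p : ℕ × ℕ =>
      ((2 * p.1 + 1 : ℕ) : ℝ) ^ k * (‖q‖ ^ 2) ^ p.1 *
      (((2 * p.2 + 1 : ℕ) : ℝ) ^ k * (‖q‖ ^ 2) ^ p.2)) :=
    hg.mul_of_nonneg hg (fun a => by positivity) (fun a => by positivity)
  refine Summable.of_norm_bounded (hprod.mul_left ‖q‖) ?_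
  rintro ⟨a, b⟩
  have hmin : ((min (2 * a + 1) (2 * b + 1) : ℕ) : ℝ) ^ k
      ≤ ((2 * a + 1 : ℕ) : ℝ) ^ k * ((2 * b + 1 : ℕ) : ℝ) ^ k := by
    rw [← mul_pow]
    refine pow_le_pow_left₀ (by positivity) ?_ k
    have h1 : ((min (2 * a + 1) (2 * b + 1) : ℕ) : ℝ) ≤ ((2 * a + 1 : ℕ) : ℝ) := by
      exact_mod_cast Nat.min_le_left _ _
    have h2 : (1:ℝ) ≤ ((2 * b + 1 : ℕ) : ℝ) := by exact_mod_cast Nat.succ_le_of_lt (by omega)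
    nlinarith [Nat.cast_nonneg (α := ℝ) (min (2 * a + 1) (2 * b + 1))]
  have hpow : ‖q‖ ^ ((2 * a + 1) * (2 * b + 1)) ≤ ‖q‖ ^ (2 * a + 2 * b + 1) :=
    pow_le_pow_of_le_one hr0 hq.le (by nlinarith)
  have hFnorm : ‖Ffun k q (a, b)‖
      = ((min (2 * a + 1) (2 * b + 1) : ℕ) : ℝ) ^ k * ‖q‖ ^ ((2 * a + 1) * (2 * b + 1)) := by
    have h0 : Ffun k q (a, b)
        = ((min (2 * a + 1) (2 * b + 1) : ℕ) : ℂ) ^ k * q ^ ((2 * a + 1) * (2 * b + 1)) := rfl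
    rw [h0, norm_mul, norm_pow, norm_pow, Complex.norm_natCast]
  rw [hFnorm]
  calc ((min (2 * a + 1) (2 * b + 1) : ℕ) : ℝ) ^ k * ‖q‖ ^ ((2 * a + 1) * (2 * b + 1))
      ≤ (((2 * a + 1 : ℕ) : ℝ) ^ k * ((2 * b + 1 : ℕ) : ℝ) ^ k) * ‖q‖ ^ (2 * a + 2 * b + 1) := by
        refine mul_le_mul hmin hpow (by positivity) (by positivity)
    _ = ‖q‖ ^ (2 * a + 2 * b + 1) * (((2 * a + 1 : ℕ) : ℝ) ^ k * ((2 * b + 1 : ℕ) : ℝ) ^ k) := by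
        ring
    _ = ‖q‖ * (((2 * a + 1 : ℕ) : ℝ) ^ k * (‖q‖ ^ 2) ^ a *
          (((2 * b + 1 : ℕ) : ℝ) ^ k * (‖q‖ ^ 2) ^ b)) := by
        rw [show (2 * a + 2 * b + 1) = 2 * a + (2 * b + 1) by ring]
        rw [pow_add, pow_add, pow_mul, pow_mul, pow_one]
        ring

lemma lambdaC (k n : ℕ) (hn : n ≠ 0) :
    (lambdaFn k n : ℂ) = (1/2 : ℂ) * ∑ d ∈ n.divisors, ((min d (n / d) : ℕ) : ℂ) ^ k := by
  have hQ : lambdaFn k n = (1/2 : ℚ) * ∑ d ∈ n.divisors, ((min d (n / d) : ℕ) : ℚ) ^ k := by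
    rw [lambdaFn]
    congr 1
    refine Finset.sum_congr rfl fun d hd => ?_
    rw [Nat.mem_divisors] at hd
    have hd0 : d ≠ 0 := by
      rintro rfl; exact hn (Nat.eq_zero_of_zero_dvd hd.1)
    congr 1
    rw [show ((n : ℚ) / (d : ℚ)) = ((n / d : ℕ) : ℚ) from
      (Nat.cast_div hd.1 (by exact_mod_cast hd0)).symm, ← Nat.cast_min]
  rw [hQ]
  simp only [Rat.cast_mul, Rat.cast_sum, Rat.cast_pow, Rat.cast_natCast, Rat.cast_div,
    Rat.cast_one, Rat.cast_ofNat]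

end LambdaAux

theorem lambda_odd_appell_lerch (k : ℕ) (hk : Odd k) (hkpos : 0 < k)
    (q : ℂ) (hq : ‖q‖ < 1) :
    2 * ∑' m : ℕ, (lambdaFn k (2 * m + 1) : ℂ) * q ^ (2 * m + 1)
      = ∑' l : ℕ, ((2 * l + 1 : ℕ) : ℂ) ^ k
          * (q ^ ((2 * l + 1) ^ 2) + q ^ ((2 * l + 1) ^ 2 + 2 * (2 * l + 1)))
          / (1 - q ^ (2 * (2 * l + 1))) := by
  have hF := summable_F k hq
  -- The common value: the sum over all ordered pairs of odd numbers.
  -- Step 1: the left-hand side equals `∑' p, Ffun k q p`.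
  have hsig : Summable (fun t : Σ m : ℕ, {x // x ∈ (2 * m + 1).divisorsAntidiagonal} =>
      Gfun k q t.2.1) := by
    refine lamEquiv.summable_iff.mp (hF.congr fun p => ?_)
    simp only [Function.comp_apply, lamEquiv_apply]
    rfl
  have hL : 2 * ∑' m : ℕ, (lambdaFn k (2 * m + 1) : ℂ) * q ^ (2 * m + 1)
      = ∑' p : ℕ × ℕ, Ffun k q p := by
    rw [← tsum_mul_left]
    have h1 : ∑' p : ℕ × ℕ, Ffun k q p
        = ∑' t : Σ m : ℕ, {x // x ∈ (2 * m + 1).divisorsAntidiagonal}, Gfun k q t.2.1 := by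
      rw [← Equiv.tsum_eq lamEquiv (fun t => Gfun k q t.2.1)]
      exact tsum_congr fun p => by simp only [lamEquiv_apply]; rfl
    rw [h1, Summable.tsum_sigma hsig]
    refine tsum_congr fun m => ?_
    have h2 : ∑' x : {x // x ∈ (2 * m + 1).divisorsAntidiagonal}, Gfun k q x.1
        = ∑ p ∈ (2 * m + 1).divisorsAntidiagonal, Gfun k q p :=
      Finset.tsum_subtype _ _
    rw [h2]
    have hn0 : (2 * m + 1) ≠ 0 := by omega
    have e1 : ∑ p ∈ (2 * m + 1).divisorsAntidiagonal, Gfun k q p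
        = ∑ p ∈ (2 * m + 1).divisorsAntidiagonal,
            ((min p.1 p.2 : ℕ) : ℂ) ^ k * q ^ (2 * m + 1) := by
      refine Finset.sum_congr rfl fun p hp => ?_
      rw [Nat.mem_divisorsAntidiagonal] at hp
      show ((min p.1 p.2 : ℕ) : ℂ) ^ k * q ^ (p.1 * p.2) = _
      rw [hp.1]
    rw [e1, ← Finset.sum_mul]
    rw [Nat.sum_divisorsAntidiagonal (fun a b => ((min a b : ℕ) : ℂ) ^ k)]
    rw [lambdaC k (2 * m + 1) hn0]
    ring
  rw [hL]
  -- Step 2: regroup the pairs by their minimum.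
  rw [← interEquiv.tsum_eq (Ffun k q)]
  have hFe : Summable (fun p : ℕ × ℕ => Ffun k q (interEquiv p)) :=
    (interEquiv.summable_iff (f := Ffun k q)).mpr hF
  rw [Summable.tsum_prod hFe]
  refine tsum_congr fun l => ?_
  set r : ℂ := q ^ (2 * (2 * l + 1)) with hrdef
  have hr : ‖r‖ < 1 := by
    rw [hrdef, norm_pow]
    exact pow_lt_one₀ (norm_nonneg q) hq (by omega)
  have heven : ∀ t : ℕ, Ffun k q (interEquiv (l, 2 * t))
      = (((2 * l + 1 : ℕ) : ℂ) ^ k * q ^ ((2 * l + 1) ^ 2)) * r ^ t := by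
    intro t
    have h8 : interTo (l, 2 * t) = (l, l + t) := by
      simp only [interTo]
      rw [if_pos (by omega)]
      congr 1
      omega
    show Ffun k q (interTo (l, 2 * t)) = _
    rw [h8]
    show ((min (2 * l + 1) (2 * (l + t) + 1) : ℕ) : ℂ) ^ k
        * q ^ ((2 * l + 1) * (2 * (l + t) + 1)) = _
    rw [show min (2 * l + 1) (2 * (l + t) + 1) = 2 * l + 1 by omega]
    rw [show (2 * l + 1) * (2 * (l + t) + 1) = (2 * l + 1) ^ 2 + 2 * (2 * l + 1) * t by ring]
    rw [pow_add, pow_mul, ← hrdef]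
    ring
  have hodd : ∀ t : ℕ, Ffun k q (interEquiv (l, 2 * t + 1))
      = (((2 * l + 1 : ℕ) : ℂ) ^ k * q ^ ((2 * l + 1) ^ 2 + 2 * (2 * l + 1))) * r ^ t := by
    intro t
    have h8 : interTo (l, 2 * t + 1) = (l + t + 1, l) := by
      simp only [interTo]
      rw [if_neg (by omega)]
      congr 1
      omega
    show Ffun k q (interTo (l, 2 * t + 1)) = _
    rw [h8]
    show ((min (2 * (l + t + 1) + 1) (2 * l + 1) : ℕ) : ℂ) ^ k
        * q ^ ((2 * (l + t + 1) + 1) * (2 * l + 1)) = _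
    rw [show min (2 * (l + t + 1) + 1) (2 * l + 1) = 2 * l + 1 by omega]
    rw [show (2 * (l + t + 1) + 1) * (2 * l + 1)
        = ((2 * l + 1) ^ 2 + 2 * (2 * l + 1)) + 2 * (2 * l + 1) * t by ring]
    rw [pow_add ((q : ℂ)) ((2 * l + 1) ^ 2 + 2 * (2 * l + 1)), pow_mul, ← hrdef]
    ring
  have hgeo : Summable (fun t : ℕ => r ^ t) := summable_geometric_of_norm_lt_one hr
  have hse : Summable (fun t : ℕ => Ffun k q (interEquiv (l, 2 * t))) :=
    (hgeo.mul_left _).congr fun t => (heven t).symm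
  have hso : Summable (fun t : ℕ => Ffun k q (interEquiv (l, 2 * t + 1))) :=
    (hgeo.mul_left _).congr fun t => (hodd t).symm
  rw [← tsum_even_add_odd (f := fun j => Ffun k q (interEquiv (l, j))) hse hso]
  rw [tsum_congr heven, tsum_congr hodd, tsum_mul_left, tsum_mul_left,
    tsum_geometric_of_norm_lt_one hr]
  rw [div_eq_mul_inv]
  ring
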